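/- Let V be a finite-dimensional real inner product space, C ⊆ V a proper cone and F a Finsler function on C. Then the polar Finsler function F^o is positively homogeneous on C^o, i.e. F^o (s • p) = s * F^o p for all s > 0 and p ∈ C^o, and concave on C^o, i.e. t * F^o p + (1 - t) * F^o q ≤ F^o (t • p + (1 - t) • q) for all p, q ∈ C^o and t ∈ [0, 1]. If moreover F is upper semicontinuous on C, then 0 < F^o p for every p ∈ V such that ⟪p, y⟫ < 0 for all y ∈ C. -/

import Mathlib

open Pointwise


/-- The polar cone of `C`. -/
def polarConeSet {V : Type*} [NormedAddCommGroup V] [InnerProductSpace ℝ V]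
    (C : Set V) : Set V :=
  {p : V | p ≠ 0 ∧ ∀ y ∈ C, (inner ℝ p y : ℝ) ≤ 0}

/-- The set whose supremum defines the polar Finsler function `F^o p`. -/
def polarWSet {V : Type*} [NormedAddCommGroup V] [InnerProductSpace ℝ V]
    (C : Set V) (F : V → ℝ) (p : V) : Set ℝ :=
  {w : ℝ | 0 ≤ w ∧ ∀ y ∈ C, (inner ℝ p y : ℝ) + w * F y ≤ 0}

/-- The polar Finsler function `F^o`. -/
noncomputable def polarFinsler {V : Type*} [NormedAddCommGroup V] [InnerProductSpace ℝ V]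
    (C : Set V) (F : V → ℝ) (p : V) : ℝ :=
  sSup (polarWSet C F p)

/-- The polar Finsler function `F^o` is positively homogeneous and concave on the polar
cone, and (for upper semicontinuous `F`) positive at every `p` with `⟪p, y⟫ < 0` on
all of `C`. -/
theorem polarFinsler_homogeneous_concave_positive
    {V : Type*} [NormedAddCommGroup V] [InnerProductSpace ℝ V] [FiniteDimensional ℝ V]
    (C : Set V) (hne : C.Nonempty) (hconv : Convex ℝ C) (h0 : (0:V) ∉ C)
    (hcone : ∀ (s : ℝ) (y : V), 0 < s → y ∈ C → s • y ∈ C)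
    (hclosed : IsClosed (C ∪ {0}))
    (hint : (interior (C ∪ {0})).Nonempty)
    (F : V → ℝ)
    (hFnn : ∀ y ∈ C, 0 ≤ F y)
    (hFhom : ∀ (s : ℝ) (y : V), 0 < s → y ∈ C → F (s • y) = s * F y)
    (hFconc : ∀ y ∈ C, ∀ w ∈ C, ∀ t : ℝ, t ∈ Set.Icc (0:ℝ) 1 →
      t * F y + (1 - t) * F w ≤ F (t • y + (1 - t) • w))
    (hFpos : ∃ y₁ ∈ C, 0 < F y₁) :
    (∀ (s : ℝ) (p : V), 0 < s → p ∈ polarConeSet C →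
      polarFinsler C F (s • p) = s * polarFinsler C F p) ∧
    (∀ p ∈ polarConeSet C, ∀ q ∈ polarConeSet C, ∀ t : ℝ, t ∈ Set.Icc (0:ℝ) 1 →
      t * polarFinsler C F p + (1 - t) * polarFinsler C F q ≤
        polarFinsler C F (t • p + (1 - t) • q)) ∧
    (UpperSemicontinuousOn F C →
      ∀ p : V, (∀ y ∈ C, (inner ℝ p y : ℝ) < 0) → 0 < polarFinsler C F p) := by
  obtain ⟨y₁, hy₁C, hy₁⟩ := hFpos
  -- every polarWSet is bounded above
  have bddW : ∀ p : V, BddAbove (polarWSet C F p) := by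
    intro p
    refine ⟨-(inner ℝ p y₁ : ℝ) / F y₁, fun w hw => ?_⟩
    have h := hw.2 y₁ hy₁C
    rw [le_div_iff₀ hy₁]
    linarith
  -- membership of 0 for polar cone elements
  have zeroW : ∀ p ∈ polarConeSet C, (0:ℝ) ∈ polarWSet C F p := by
    intro p hp
    exact ⟨le_refl 0, fun y hy => by simpa using hp.2 y hy⟩
  refine ⟨?_, ?_, ?_⟩
  · -- homogeneity
    intro s p hs hp
    have hset : polarWSet C F (s • p) = s • polarWSet C F p := by
      ext w
      constructor
      · rintro ⟨hw0, hw⟩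
        refine ⟨s⁻¹ * w, ⟨by positivity, fun y hy => ?_⟩, ?_⟩
        · have h := hw y hy
          rw [real_inner_smul_left] at h
          have h2 := mul_le_mul_of_nonneg_left h (le_of_lt (inv_pos.2 hs))
          rw [mul_zero] at h2
          have h4 : (inner ℝ p y : ℝ) + s⁻¹ * w * F y
              = s⁻¹ * (s * (inner ℝ p y : ℝ) + w * F y) := by
            field_simp
          rw [h4]
          exact h2
        · simp [smul_eq_mul]
          field_simp
      · rintro ⟨v, ⟨hv0, hv⟩, rfl⟩
        refine ⟨by simp [smul_eq_mul]; positivity, fun y hy => ?_⟩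
        have h := hv y hy
        rw [real_inner_smul_left]
        simp only [smul_eq_mul]
        nlinarith [h]
    show sSup (polarWSet C F (s • p)) = s * sSup (polarWSet C F p)
    rw [hset, Real.sSup_smul_of_nonneg hs.le, smul_eq_mul]
  · -- concavity
    intro p hp q hq t ht
    obtain ⟨ht0, ht1⟩ := ht
    set A := polarWSet C F p
    set B := polarWSet C F q
    set D := polarWSet C F (t • p + (1 - t) • q)
    have hmem : ∀ a ∈ A, ∀ b ∈ B, t * a + (1 - t) * b ∈ D := by
      intro a ha b hb
      constructor
      · have := ha.1; have := hb.1; nlinarith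
      · intro y hy
        have h1 := ha.2 y hy
        have h2 := hb.2 y hy
        rw [inner_add_left, real_inner_smul_left, real_inner_smul_left]
        nlinarith [h1, h2]
    have hA : A.Nonempty := ⟨0, zeroW p hp⟩
    have hB : B.Nonempty := ⟨0, zeroW q hq⟩
    have hDb : BddAbove D := bddW _
    show t * sSup A + (1 - t) * sSup B ≤ sSup D
    rcases eq_or_lt_of_le ht0 with h | htpos
    · subst h
      simp only [zero_mul, sub_zero, one_mul, zero_add]
      exact csSup_le hB fun b hb => le_csSup hDb (by simpa using hmem 0 (zeroW p hp) b hb)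
    rcases eq_or_lt_of_le ht1 with h | htlt
    · subst h
      simp only [one_mul, sub_self, zero_mul, add_zero]
      exact csSup_le hA fun a ha => le_csSup hDb (by simpa using hmem a ha 0 (zeroW q hq))
    have h1t : 0 < 1 - t := by linarith
    have h1 : sSup A ≤ (sSup D - (1 - t) * sSup B) / t := by
      apply csSup_le hA
      intro a ha
      have h2 : sSup B ≤ (sSup D - t * a) / (1 - t) := by
        apply csSup_le hB
        intro b hb
        have := le_csSup hDb (hmem a ha b hb)
        rw [le_div_iff₀ h1t]
        linarith
      have h3 := (le_div_iff₀ h1t).mp h2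
      rw [le_div_iff₀ htpos]
      linarith
    have h4 := (le_div_iff₀ htpos).mp h1
    linarith
  · -- positivity
    intro husc p hstrict
    set K := C ∩ Metric.sphere (0:V) 1 with hKdef
    have hKsub : K ⊆ C := Set.inter_subset_left
    have hKeq : K = (C ∪ {0}) ∩ Metric.sphere (0:V) 1 := by
      ext x
      simp only [hKdef, Set.mem_inter_iff, Set.mem_union, Set.mem_singleton_iff,
        Metric.mem_sphere, dist_zero_right]
      constructor
      · rintro ⟨hx, hn⟩; exact ⟨Or.inl hx, hn⟩
      · rintro ⟨hx | rfl, hn⟩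
        · exact ⟨hx, hn⟩
        · simp at hn
    have hK : IsCompact K := by
      rw [hKeq]
      exact (isCompact_sphere 0 1).inter_left hclosed
    have hKne : K.Nonempty := by
      obtain ⟨y, hy⟩ := hne
      have hy0 : y ≠ 0 := fun h => h0 (h ▸ hy)
      have hn : (0:ℝ) < ‖y‖ := norm_pos_iff.2 hy0
      refine ⟨‖y‖⁻¹ • y, hcone _ _ (inv_pos.2 hn) hy, ?_⟩
      simp [norm_smul, abs_of_pos (inv_pos.2 hn), inv_mul_cancel₀ (ne_of_gt hn)]
    -- max of inner on K
    obtain ⟨y₀, hy₀K, hy₀max⟩ := hK.exists_isMaxOn hKne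
      ((continuous_const.inner continuous_id).continuousOn :
        ContinuousOn (fun y : V => (inner ℝ p y : ℝ)) K)
    set m : ℝ := inner ℝ p y₀ with hm
    have hmneg : m < 0 := hstrict y₀ (hKsub hy₀K)
    -- F bounded above on K
    have hFbdd : BddAbove (F '' K) := by
      refine hK.induction_on ?_ ?_ ?_ ?_
      · simp
      · intro s t hst hbt
        exact hbt.mono (Set.image_mono hst)
      · intro s t hs ht
        rw [Set.image_union]
        exact hs.union ht
      · intro x hx
        have h1 : ∀ᶠ z in nhdsWithin x C, F z < F x + 1 :=
          husc x (hKsub hx) (F x + 1) (lt_add_one _)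
        have h2 : ∀ᶠ z in nhdsWithin x K, F z < F x + 1 :=
          h1.filter_mono (nhdsWithin_mono x hKsub)
        refine ⟨{z | F z < F x + 1}, h2, ⟨F x + 1, ?_⟩⟩
        rintro w ⟨z, hz, rfl⟩
        exact le_of_lt hz
    obtain ⟨M, hM⟩ := hFbdd
    set M' : ℝ := max M 1 with hM'
    have hM'pos : (0:ℝ) < M' := lt_of_lt_of_le one_pos (le_max_right _ _)
    have hMK : ∀ y ∈ K, F y ≤ M' := fun y hy =>
      le_trans (hM ⟨y, hy, rfl⟩) (le_max_left _ _)
    set ε : ℝ := (-m) / M' with hε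
    have hεpos : 0 < ε := div_pos (by linarith) hM'pos
    have hεW : ε ∈ polarWSet C F p := by
      refine ⟨le_of_lt hεpos, fun y hy => ?_⟩
      have hy0 : y ≠ 0 := fun h => h0 (h ▸ hy)
      have hn : (0:ℝ) < ‖y‖ := norm_pos_iff.2 hy0
      set u : V := ‖y‖⁻¹ • y with hu
      have huK : u ∈ K := by
        refine ⟨hcone _ _ (inv_pos.2 hn) hy, ?_⟩
        simp [hu, norm_smul, abs_of_pos (inv_pos.2 hn), inv_mul_cancel₀ (ne_of_gt hn)]
      have hyu : y = ‖y‖ • u := by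
        rw [hu, smul_inv_smul₀ (ne_of_gt hn)]
      have hinner : (inner ℝ p y : ℝ) = ‖y‖ * inner ℝ p u := by
        conv_lhs => rw [hyu]
        rw [real_inner_smul_right]
      have hFy : F y = ‖y‖ * F u := by
        conv_lhs => rw [hyu]
        exact hFhom _ _ hn (hKsub huK)
      have h5 : (inner ℝ p u : ℝ) ≤ m := hy₀max huK
      have h6 : F u ≤ M' := hMK u huK
      have h7 : 0 ≤ F u := hFnn u (hKsub huK)
      have h8 : ε * M' = -m := div_mul_cancel₀ _ (ne_of_gt hM'pos)
      rw [hinner, hFy]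
      have h9 : ε * (‖y‖ * F u) ≤ ε * (‖y‖ * M') :=
        mul_le_mul_of_nonneg_left (mul_le_mul_of_nonneg_left h6 (le_of_lt hn)) (le_of_lt hεpos)
      have h10 : ‖y‖ * (inner ℝ p u : ℝ) ≤ ‖y‖ * m := mul_le_mul_of_nonneg_left h5 (le_of_lt hn)
      nlinarith [h9, h10, h8]
    exact lt_of_lt_of_le hεpos (le_csSup (bddW p) hεW)
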